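/- Fix w ∈ ℝ^p, b ∈ ℝ, training samples (x_n, y_n) ∈ ℝ^p × {−1, +1} for n = 1, …, N, and constants A > 0, C_a ≥ 0, C > 0. Let U₀ = {δ ∈ ℝ^p : ‖δ‖₂² ≤ C} and U⁺ = {(α₁δ₁, …, α_Nδ_N) : Σ_{i=1}^N α_i = 1, α_i ≥ 0, δ_i ∈ U₀ for all i}. Then sup over (δ₁, …, δ_N) ∈ U⁺ of [ A Σ_{n=1}^N [1 − y_n(wᵀ(x_n − δ_n) + b)]₊ − C_a Σ_{n=1}^N ‖δ_n‖₀ ] is less than or equal to A Σ_{n=1}^N [1 − y_n(wᵀx_n + b)]₊ + sup over δ ∈ U₀ of [ A wᵀδ − C_a ‖δ‖₀ ]. -/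
import Mathlib


open Finset

/-- Hinge function `[z]₊ = max(z, 0)`. -/
noncomputable def hinge (z : ℝ) : ℝ := max z 0

/-- ℓ0 "norm": number of nonzero coordinates, as a real number. -/
noncomputable def l0 {p : ℕ} (δ : Fin p → ℝ) : ℝ :=
  ((Finset.univ.filter (fun i => δ i ≠ 0)).card : ℝ)

/-- Atomic action set `U₀ = {δ : ‖δ‖₂² ≤ C}`. -/
def atomicSet (p : ℕ) (C : ℝ) : Set (Fin p → ℝ) :=
  {δ | ∑ i, (δ i) ^ 2 ≤ C}

/-- `U⁺`: convex-combination-scaled perturbations from `U₀`. -/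
def Uplus (p N : ℕ) (C : ℝ) : Set (Fin N → Fin p → ℝ) :=
  {d | ∃ (α : Fin N → ℝ) (δ : Fin N → Fin p → ℝ),
    (∑ i, α i = 1) ∧ (∀ i, 0 ≤ α i) ∧ (∀ i, δ i ∈ atomicSet p C) ∧
    ∀ i, d i = α i • δ i}

lemma hinge_nonneg (z : ℝ) : 0 ≤ hinge z := le_max_right _ _

lemma hinge_subadd (a c : ℝ) : hinge (a + c) ≤ hinge a + hinge c := by
  unfold hinge
  rcases le_or_gt a 0 with h | h <;> rcases le_or_gt c 0 with h' | h' <;>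
    simp [max_def] <;> split_ifs <;> nlinarith

lemma hinge_smul {c : ℝ} (hc : 0 ≤ c) (z : ℝ) : hinge (c * z) = c * hinge z := by
  unfold hinge
  rcases le_or_gt z 0 with h | h
  · rw [max_eq_right h, max_eq_right (by nlinarith), mul_zero]
  · rw [max_eq_left h.le, max_eq_left (by nlinarith)]

lemma l0_nonneg {p : ℕ} (δ : Fin p → ℝ) : 0 ≤ l0 δ := Nat.cast_nonneg _

lemma l0_zero {p : ℕ} : l0 (0 : Fin p → ℝ) = 0 := by simp [l0]

lemma l0_smul {p : ℕ} {c : ℝ} (hc : c ≠ 0) (δ : Fin p → ℝ) : l0 (c • δ) = l0 δ := by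
  unfold l0
  congr 2
  apply Finset.filter_congr
  intro i _
  simp [hc]

/-- upper bound, Inequality (28) of Appendix A. -/
theorem robust_hinge_upper_bound {p N : ℕ}
    (w : Fin p → ℝ) (b : ℝ)
    (x : Fin N → Fin p → ℝ) (y : Fin N → ℝ)
    (hy : ∀ n, y n = 1 ∨ y n = -1)
    (A Ca C : ℝ) (hA : 0 < A) (hCa : 0 ≤ Ca) (hC : 0 < C) :
    sSup ((fun d : Fin N → Fin p → ℝ =>
        A * ∑ n, hinge (1 - y n * ((∑ i, w i * (x n i - d n i)) + b))
          - Ca * ∑ n, l0 (d n)) '' Uplus p N C)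
      ≤
    A * ∑ n, hinge (1 - y n * ((∑ i, w i * x n i) + b))
      + sSup ((fun δ : Fin p → ℝ =>
          A * (∑ i, w i * δ i) - Ca * l0 δ) '' atomicSet p C) := by
  set f : (Fin p → ℝ) → ℝ := fun δ => A * (∑ i, w i * δ i) - Ca * l0 δ with hf
  -- boundedness of the atomic sup
  have hbdd : BddAbove (f '' atomicSet p C) := by
    refine ⟨A * ((∑ i, |w i|) * Real.sqrt C), ?_⟩
    rintro v ⟨δ, hδ, rfl⟩
    have hδi : ∀ i, |δ i| ≤ Real.sqrt C := by
      intro i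
      have h1 : (δ i) ^ 2 ≤ C := by
        refine le_trans ?_ hδ
        exact Finset.single_le_sum (fun j _ => sq_nonneg (δ j)) (mem_univ i)
      calc |δ i| = Real.sqrt ((δ i) ^ 2) := (Real.sqrt_sq_eq_abs _).symm
        _ ≤ Real.sqrt C := Real.sqrt_le_sqrt h1
    have h2 : (∑ i, w i * δ i) ≤ (∑ i, |w i|) * Real.sqrt C := by
      rw [Finset.sum_mul]
      refine Finset.sum_le_sum (fun i _ => ?_)
      calc w i * δ i ≤ |w i * δ i| := le_abs_self _
        _ = |w i| * |δ i| := abs_mul _ _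
        _ ≤ |w i| * Real.sqrt C := by
            exact mul_le_mul_of_nonneg_left (hδi i) (abs_nonneg _)
    have h3 : 0 ≤ Ca * l0 δ := mul_nonneg hCa (l0_nonneg δ)
    simp only [hf]
    nlinarith
  have hzero_mem : (0 : Fin p → ℝ) ∈ atomicSet p C := by
    simp [atomicSet, hC.le]
  have hS0 : 0 ≤ sSup (f '' atomicSet p C) := by
    have : f 0 ≤ sSup (f '' atomicSet p C) :=
      le_csSup hbdd ⟨0, hzero_mem, rfl⟩
    simpa [hf, l0_zero] using this
  set S := sSup (f '' atomicSet p C) with hS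
  set H := A * ∑ n, hinge (1 - y n * ((∑ i, w i * x n i) + b)) with hH
  have hHnn : 0 ≤ H :=
    mul_nonneg hA.le (Finset.sum_nonneg fun n _ => hinge_nonneg _)
  refine Real.sSup_le ?_ (by linarith)
  rintro v ⟨d, ⟨α, δ, hα1, hα0, hδU, hd⟩, rfl⟩
  -- the key per-sample claim
  have key : ∀ n, A * (α n * hinge (y n * ∑ i, w i * δ n i)) - Ca * l0 (d n)
      ≤ α n * S := by
    intro n
    rcases eq_or_lt_of_le (hα0 n) with hz | hpos
    · rw [← hz]
      have : d n = 0 := by rw [hd n, ← hz, zero_smul]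
      simp [this, l0_zero]
    · have hαle1 : α n ≤ 1 := by
        rw [← hα1]
        exact Finset.single_le_sum (fun j _ => hα0 j) (mem_univ n)
      have hl0 : l0 (d n) = l0 (δ n) := by
        rw [hd n]; exact l0_smul (ne_of_gt hpos) _
      have hyn : y n ≠ 0 := by rcases hy n with h | h <;> simp [h]
      have hinner : A * hinge (y n * ∑ i, w i * δ n i) - Ca * l0 (δ n) ≤ S := by
        rcases le_or_gt (y n * ∑ i, w i * δ n i) 0 with ht | ht
        · have : hinge (y n * ∑ i, w i * δ n i) = 0 := max_eq_right ht
          rw [this, mul_zero]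
          have := mul_nonneg hCa (l0_nonneg (δ n))
          linarith
        · have hmem : (y n • δ n) ∈ atomicSet p C := by
            have hy2 : (y n) ^ 2 = 1 := by rcases hy n with h | h <;> simp [h]
            simpa [atomicSet, mul_pow, hy2, Pi.smul_apply, smul_eq_mul]
              using hδU n
          have hle : f (y n • δ n) ≤ S := le_csSup hbdd ⟨_, hmem, rfl⟩
          have hsum : (∑ i, w i * (y n • δ n) i) = y n * ∑ i, w i * δ n i := by
            rw [Finset.mul_sum]
            exact Finset.sum_congr rfl (fun i _ => by
              simp only [Pi.smul_apply, smul_eq_mul]; ring)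
          have heq : f (y n • δ n)
              = A * (y n * ∑ i, w i * δ n i) - Ca * l0 (δ n) := by
            simp only [hf]
            rw [hsum, l0_smul hyn]
          unfold hinge
          rw [max_eq_left ht.le]
          linarith [heq ▸ hle]
      calc A * (α n * hinge (y n * ∑ i, w i * δ n i)) - Ca * l0 (d n)
          ≤ α n * (A * hinge (y n * ∑ i, w i * δ n i) - Ca * l0 (δ n)) := by
            rw [hl0]
            have h1 : 0 ≤ Ca * l0 (δ n) := mul_nonneg hCa (l0_nonneg _)
            nlinarith
        _ ≤ α n * S := mul_le_mul_of_nonneg_left hinner (hα0 n)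
  -- pointwise hinge bound
  have hptwise : ∀ n,
      hinge (1 - y n * ((∑ i, w i * (x n i - d n i)) + b))
        ≤ hinge (1 - y n * ((∑ i, w i * x n i) + b))
          + α n * hinge (y n * ∑ i, w i * δ n i) := by
    intro n
    have harg : 1 - y n * ((∑ i, w i * (x n i - d n i)) + b)
        = (1 - y n * ((∑ i, w i * x n i) + b))
          + α n * (y n * ∑ i, w i * δ n i) := by
      have hsum : ∑ i, w i * (x n i - d n i)
          = (∑ i, w i * x n i) - α n * ∑ i, w i * δ n i := by
        rw [Finset.mul_sum, ← Finset.sum_sub_distrib]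
        refine Finset.sum_congr rfl (fun i _ => ?_)
        rw [hd n]; simp only [Pi.smul_apply, smul_eq_mul]; ring
      rw [hsum]; ring
    rw [harg]
    calc hinge _ ≤ hinge (1 - y n * ((∑ i, w i * x n i) + b))
          + hinge (α n * (y n * ∑ i, w i * δ n i)) := hinge_subadd _ _
      _ = _ := by rw [hinge_smul (hα0 n)]
  calc A * ∑ n, hinge (1 - y n * ((∑ i, w i * (x n i - d n i)) + b))
        - Ca * ∑ n, l0 (d n)
      ≤ A * ∑ n, (hinge (1 - y n * ((∑ i, w i * x n i) + b))
          + α n * hinge (y n * ∑ i, w i * δ n i)) - Ca * ∑ n, l0 (d n) := by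
        have := Finset.sum_le_sum (fun n (_ : n ∈ Finset.univ) => hptwise n)
        nlinarith
    _ = H + ∑ n, (A * (α n * hinge (y n * ∑ i, w i * δ n i)) - Ca * l0 (d n)) := by
        rw [hH]
        simp only [mul_add, Finset.mul_sum, Finset.sum_add_distrib,
          Finset.sum_sub_distrib]
        ring
    _ ≤ H + ∑ n, α n * S := by
        have := Finset.sum_le_sum (fun n (_ : n ∈ Finset.univ) => key n)
        linarith
    _ = H + S := by rw [← Finset.sum_mul, hα1, one_mul]
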